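/- For all positive integers $n$ and $k$ with $n > \frac{k+2}{24}$, $1 < \left(1 - \frac{1}{24n}\right)^{-\frac{k+2}{2}} < 1 + \frac{k}{3n}$. -/

import Mathlib

theorem stmt15 (n k : ℕ) (hn : 1 ≤ n) (hk : 1 ≤ k) (h : (n : ℝ) > ((k : ℝ) + 2) / 24) :
    1 < (1 - 1 / (24 * (n : ℝ))) ^ (-(((k : ℝ) + 2) / 2)) ∧
    (1 - 1 / (24 * (n : ℝ))) ^ (-(((k : ℝ) + 2) / 2)) < 1 + (k : ℝ) / (3 * n) := by
  have hn1 : (1 : ℝ) ≤ n := by exact_mod_cast hn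
  have hk1 : (1 : ℝ) ≤ k := by exact_mod_cast hk
  have hn0 : (0 : ℝ) < n := by linarith
  set x : ℝ := 1 - 1 / (24 * (n : ℝ)) with hxdef
  have hε : 1 / (24 * (n : ℝ)) ≤ 1 / 24 := by
    apply div_le_div_of_nonneg_left (by norm_num) (by norm_num) (by linarith)
  have hεpos : 0 < 1 / (24 * (n : ℝ)) := by positivity
  have hx0 : 0 < x := by simp only [hxdef]; linarith
  have hx1 : x < 1 := by simp only [hxdef]; linarith
  set p : ℝ := ((k : ℝ) + 2) / 2 with hpdef
  have hp1 : 1 ≤ p := by simp only [hpdef]; linarith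
  have hp0 : 0 < p := by linarith
  constructor
  · rw [Real.one_lt_rpow_iff_of_pos hx0]
    exact Or.inr ⟨hx1, by linarith⟩
  · have hB : 1 + p * (-(1 / (24 * (n : ℝ)))) ≤ x ^ p := by
      have := one_add_mul_self_le_rpow_one_add
        (s := -(1 / (24 * (n : ℝ)))) (by linarith) hp1
      have hxe : x = 1 + -(1 / (24 * (n : ℝ))) := by simp only [hxdef]; ring
      rw [hxe]; exact this
    have h24 : (k : ℝ) + 2 < 24 * n := by
      rw [gt_iff_lt, div_lt_iff₀ (by norm_num)] at h; linarith
    have hpe : p * (1 / (24 * (n : ℝ))) = ((k : ℝ) + 2) / (48 * n) := by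
      simp only [hpdef]; rw [div_mul_div_comm, mul_one]; ring_nf
    have hhalf : ((k : ℝ) + 2) / (48 * n) < 1 / 2 := by
      rw [div_lt_div_iff₀ (by positivity) (by norm_num)]; linarith
    have hq : 0 < 1 + p * (-(1 / (24 * (n : ℝ)))) := by
      have : p * (-(1 / (24 * (n : ℝ)))) = -(p * (1 / (24 * (n : ℝ)))) := by ring
      rw [this, hpe]; linarith
    rw [Real.rpow_neg hx0.le]
    have hxp : 0 < x ^ p := Real.rpow_pos_of_pos hx0 p
    have h1 : (x ^ p)⁻¹ ≤ (1 + p * (-(1 / (24 * (n : ℝ)))))⁻¹ :=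
      inv_anti₀ hq hB
    refine lt_of_le_of_lt h1 ?_
    rw [inv_lt_iff_one_lt_mul₀ hq, hpdef]
    have hn2 : (0:ℝ) < n * n := by positivity
    field_simp
    nlinarith [h24, hk1, hn1, mul_pos hn0 hn0, sq_nonneg ((k:ℝ) - 1)]
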